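/- (Semi-nondegeneracy of the Zakharov–Kuznetsov Hessian.) Let d ≥ 3 and set φ(ξ) := ξ¹ |ξ|² for ξ = (ξ¹,…,ξ^d) ∈ ℝ^d. Fix p, p₂ ∈ ℝ^d and define F : ℝ^d → ℝ by F(p₁) := φ(p) − φ(p₁) − φ(p₂) − φ(p − p₁ − p₂). Then for every p₁ ∈ ℝ^d, the Hessian matrix D²F(p₁) has rank at most 1 if and only if p₁ = −(p − p₁ − p₂), i.e. if and only if p₁ + p₃ = 0 where p₃ := p − p₁ − p₂; in particular, if p₁ + p₃ ≠ 0 then rank D²F(p₁) ≥ 2. -/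

import Mathlib

open MeasureTheory

/-- The Zakharov–Kuznetsov dispersion symbol `φ(ξ) = ξ¹ |ξ|²` on `ℝ^d`. -/
noncomputable def phiZK (d : ℕ) (hd : 0 < d) (ξ : EuclideanSpace ℝ (Fin d)) : ℝ :=
  ξ ⟨0, hd⟩ * ‖ξ‖ ^ 2

/-- The Hessian matrix of a function `F : ℝ^d → ℝ` at a point `x`, with entries the second
partial derivatives `∂²F/∂ξⁱ∂ξʲ (x)`. -/
noncomputable def hessianMatrix (d : ℕ) (F : EuclideanSpace ℝ (Fin d) → ℝ)
    (x : EuclideanSpace ℝ (Fin d)) : Matrix (Fin d) (Fin d) ℝ :=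
  Matrix.of fun i j =>
    fderiv ℝ (fun y => fderiv ℝ F y (EuclideanSpace.single j 1)) x (EuclideanSpace.single i 1)

open scoped RealInnerProductSpace

section Aux

variable {d : ℕ}

noncomputable def gvalZK (h : 0 < d) (x v : EuclideanSpace ℝ (Fin d)) : ℝ :=
  ⟪x, x⟫ * v ⟨0, h⟩ + x ⟨0, h⟩ * (⟪x, v⟫ + ⟪v, x⟫)

lemma phiZK_hasFDerivAt (h : 0 < d) (x : EuclideanSpace ℝ (Fin d)) :
    ∃ L : EuclideanSpace ℝ (Fin d) →L[ℝ] ℝ, HasFDerivAt (phiZK d h) L x ∧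
      ∀ v, L v = gvalZK h x v := by
  have hq : HasFDerivAt (fun y : EuclideanSpace ℝ (Fin d) => ⟪y, y⟫)
      ((fderivInnerCLM ℝ (x, x)).comp ((ContinuousLinearMap.id ℝ _).prod
        (ContinuousLinearMap.id ℝ _))) x :=
    (hasFDerivAt_id x).inner ℝ (hasFDerivAt_id x)
  have hp := (EuclideanSpace.proj (⟨0, h⟩ : Fin d) : EuclideanSpace ℝ (Fin d) →L[ℝ] ℝ).hasFDerivAt (x := x)
  have hm : HasFDerivAt (fun y : EuclideanSpace ℝ (Fin d) =>
      EuclideanSpace.proj (⟨0, h⟩ : Fin d) y * ⟪y, y⟫) _ x := hp.mul hq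
  have hfun : (fun y : EuclideanSpace ℝ (Fin d) =>
      EuclideanSpace.proj (⟨0, h⟩ : Fin d) y * ⟪y, y⟫) = phiZK d h := by
    funext y
    show y ⟨0, h⟩ * ⟪y, y⟫ = phiZK d h y
    rw [real_inner_self_eq_norm_sq]
    rfl
  rw [hfun] at hm
  refine ⟨_, hm, fun v => ?_⟩
  simp [gvalZK, fderivInnerCLM_apply]
  ring

lemma F_hasFDerivAt (h : 0 < d) (p p₂ y : EuclideanSpace ℝ (Fin d)) :
    ∃ L : EuclideanSpace ℝ (Fin d) →L[ℝ] ℝ,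
      HasFDerivAt (fun q => phiZK d h p - phiZK d h q - phiZK d h p₂ -
        phiZK d h (p - q - p₂)) L y ∧
      ∀ v, L v = -(gvalZK h y v) + gvalZK h (p - y - p₂) v := by
  obtain ⟨L1, hL1, hL1v⟩ := phiZK_hasFDerivAt h y
  obtain ⟨L3, hL3, hL3v⟩ := phiZK_hasFDerivAt h (p - y - p₂)
  have ha : HasFDerivAt (fun q : EuclideanSpace ℝ (Fin d) => p - q - p₂)
      ((0 : _ →L[ℝ] _) - ContinuousLinearMap.id ℝ _ - 0) y :=
    ((hasFDerivAt_const p y).sub (hasFDerivAt_id y)).sub (hasFDerivAt_const p₂ y)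
  have hc := hL3.comp y ha
  refine ⟨_, (((hasFDerivAt_const (phiZK d h p) y).sub hL1).sub
    (hasFDerivAt_const (phiZK d h p₂) y)).sub hc, fun v => ?_⟩
  simp only [ContinuousLinearMap.coe_sub', Pi.sub_apply, ContinuousLinearMap.zero_apply,
    ContinuousLinearMap.coe_comp', Function.comp_apply, ContinuousLinearMap.coe_id',
    id_eq, hL1v, hL3v]
  have h0 : (0 : EuclideanSpace ℝ (Fin d)) - v - 0 = -v := by abel
  rw [h0]
  simp [gvalZK, inner_neg_left, inner_neg_right]
  ring

lemma gvalZK_hasFDerivAt (h : 0 < d) (v x : EuclideanSpace ℝ (Fin d)) :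
    ∃ L : EuclideanSpace ℝ (Fin d) →L[ℝ] ℝ,
      HasFDerivAt (fun y => gvalZK h y v) L x ∧
      ∀ w, L w = (⟪x, w⟫ + ⟪w, x⟫) * v ⟨0, h⟩ + w ⟨0, h⟩ * (⟪x, v⟫ + ⟪v, x⟫) +
        x ⟨0, h⟩ * (⟪w, v⟫ + ⟪v, w⟫) := by
  have hq : HasFDerivAt (fun y : EuclideanSpace ℝ (Fin d) => ⟪y, y⟫)
      ((fderivInnerCLM ℝ (x, x)).comp ((ContinuousLinearMap.id ℝ _).prod
        (ContinuousLinearMap.id ℝ _))) x :=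
    (hasFDerivAt_id x).inner ℝ (hasFDerivAt_id x)
  have h1 := hq.mul_const (v ⟨0, h⟩)
  have hiv := (hasFDerivAt_id x).inner ℝ (hasFDerivAt_const v x)
  have hvi := (hasFDerivAt_const v x).inner ℝ (hasFDerivAt_id x)
  have hp := (EuclideanSpace.proj (⟨0, h⟩ : Fin d) :
    EuclideanSpace ℝ (Fin d) →L[ℝ] ℝ).hasFDerivAt (x := x)
  have h2 := hp.mul (hiv.add hvi)
  have htot := h1.add h2
  refine ⟨_, htot, fun w => ?_⟩
  simp [fderivInnerCLM_apply]
  ring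

lemma hessian_entry (h : 0 < d) (p p₂ p₁ : EuclideanSpace ℝ (Fin d)) (i j : Fin d) :
    hessianMatrix d (fun q => phiZK d h p - phiZK d h q - phiZK d h p₂ -
      phiZK d h (p - q - p₂)) p₁ i j =
    -2 * ((if j = ⟨0, h⟩ then (p₁ + (p - p₁ - p₂)) i else 0) +
      (if i = j then (p₁ + (p - p₁ - p₂)) ⟨0, h⟩ else 0) +
      (if i = ⟨0, h⟩ then (p₁ + (p - p₁ - p₂)) j else 0)) := by
  have hfun : (fun y => fderiv ℝ (fun q => phiZK d h p - phiZK d h q - phiZK d h p₂ -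
        phiZK d h (p - q - p₂)) y (EuclideanSpace.single j 1)) =
      (fun y => -(gvalZK h y (EuclideanSpace.single j 1)) +
        gvalZK h (p - y - p₂) (EuclideanSpace.single j 1)) := by
    funext y
    obtain ⟨L, hL, hLv⟩ := F_hasFDerivAt h p p₂ y
    rw [hL.fderiv, hLv]
  show fderiv ℝ _ p₁ (EuclideanSpace.single i 1) = _
  rw [hfun]
  obtain ⟨L1, h1, h1v⟩ := gvalZK_hasFDerivAt h (EuclideanSpace.single j 1) p₁
  obtain ⟨L3, h3, h3v⟩ := gvalZK_hasFDerivAt h (EuclideanSpace.single j 1) (p - p₁ - p₂)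
  have ha : HasFDerivAt (fun q : EuclideanSpace ℝ (Fin d) => p - q - p₂)
      ((0 : _ →L[ℝ] _) - ContinuousLinearMap.id ℝ _ - 0) p₁ :=
    ((hasFDerivAt_const p p₁).sub (hasFDerivAt_id p₁)).sub (hasFDerivAt_const p₂ p₁)
  have hc := h3.comp p₁ ha
  have htot : HasFDerivAt (fun y => -(gvalZK h y (EuclideanSpace.single j 1)) +
      gvalZK h (p - y - p₂) (EuclideanSpace.single j 1))
      (-L1 + L3.comp ((0 : _ →L[ℝ] _) - ContinuousLinearMap.id ℝ _ - 0)) p₁ := h1.neg.add hc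
  rw [htot.fderiv]
  simp only [ContinuousLinearMap.add_apply, ContinuousLinearMap.neg_apply,
    ContinuousLinearMap.coe_comp', Function.comp_apply, ContinuousLinearMap.coe_sub',
    Pi.sub_apply, ContinuousLinearMap.zero_apply, ContinuousLinearMap.coe_id', id_eq]
  rw [show (0 : EuclideanSpace ℝ (Fin d)) - EuclideanSpace.single i 1 - 0 =
    -(EuclideanSpace.single i 1) from by abel]
  rw [h1v, h3v]
  simp only [EuclideanSpace.inner_single_left, EuclideanSpace.inner_single_right,
    EuclideanSpace.single_apply, inner_neg_left, inner_neg_right, PiLp.add_apply,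
    PiLp.sub_apply, PiLp.neg_apply, starRingEnd_apply, star_trivial, map_one, one_mul,
    mul_one, RCLike.star_def, conj_trivial]
  split_ifs <;> subst_vars
  all_goals try contradiction
  all_goals ring


lemma two_rows_rank {n : ℕ} (M : Matrix (Fin n) (Fin n) ℝ) (a b : Fin n)
    (hdet : M a a * M b b - M a b * M b a ≠ 0) : 2 ≤ M.rank := by
  have li : LinearIndependent ℝ ![M a, M b] := by
    rw [LinearIndependent.pair_iff]
    intro c e hce
    have ea := congrFun hce a
    have eb := congrFun hce b
    simp only [Pi.add_apply, Pi.smul_apply, smul_eq_mul, Pi.zero_apply] at ea eb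
    constructor
    · have hc : c * (M a a * M b b - M a b * M b a) =
        (c * M a a + e * M b a) * M b b - (c * M a b + e * M b b) * M b a := by ring
      rw [ea, eb] at hc
      simp only [zero_mul, sub_zero, sub_self] at hc
      rcases mul_eq_zero.mp hc with h1 | h1
      · exact h1
      · exact absurd h1 hdet
    · have hc : e * (M a a * M b b - M a b * M b a) =
        M a a * (c * M a b + e * M b b) - M a b * (c * M a a + e * M b a) := by ring
      rw [ea, eb] at hc
      simp only [mul_zero, sub_zero, sub_self] at hc
      rcases mul_eq_zero.mp hc with h1 | h1
      · exact h1
      · exact absurd h1 hdet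
  have hle : Submodule.span ℝ (Set.range ![M a, M b]) ≤ Submodule.span ℝ (Set.range M) := by
    apply Submodule.span_mono
    rintro x ⟨t, rfl⟩
    fin_cases t
    · exact ⟨a, rfl⟩
    · exact ⟨b, rfl⟩
  have h2 : Module.finrank ℝ (Submodule.span ℝ (Set.range ![M a, M b])) = 2 := by
    rw [finrank_span_eq_card li, Fintype.card_fin]
  rw [Matrix.rank_eq_finrank_span_row]
  calc (2 : ℕ) = _ := h2.symm
    _ ≤ _ := Submodule.finrank_mono hle

lemma rank_core (h : 0 < d) (hd : 3 ≤ d) (s : EuclideanSpace ℝ (Fin d))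
    (M : Matrix (Fin d) (Fin d) ℝ)
    (hM : ∀ i j, M i j = -2 * ((if j = ⟨0, h⟩ then s i else 0) +
      (if i = j then s ⟨0, h⟩ else 0) + (if i = ⟨0, h⟩ then s j else 0))) :
    (M.rank ≤ 1 ↔ s = 0) ∧ (s ≠ 0 → 2 ≤ M.rank) := by
  have main : s ≠ 0 → 2 ≤ M.rank := by
    intro hs
    by_cases hs0 : s ⟨0, h⟩ = 0
    · obtain ⟨k, hk⟩ : ∃ k, s k ≠ 0 := by
        by_contra hk
        push_neg at hk
        exact hs (by ext i; simpa using hk i)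
      have hki0 : k ≠ ⟨0, h⟩ := fun hkk => hk (hkk ▸ hs0)
      apply two_rows_rank M ⟨0, h⟩ k
      have e1 : M ⟨0, h⟩ ⟨0, h⟩ = 0 := by rw [hM]; simp [hs0]
      have e2 : M ⟨0, h⟩ k = -2 * s k := by
        rw [hM]; simp [hki0, Ne.symm hki0, hs0]
      have e3 : M k ⟨0, h⟩ = -2 * s k := by
        rw [hM]; simp [hki0, Ne.symm hki0, hs0]
      have e4 : M k k = 0 := by rw [hM]; simp [hki0, hs0]
      rw [e1, e2, e3, e4]
      intro hcon
      apply hk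
      have : (2 * s k) * (2 * s k) = 0 := by linarith [hcon]
      rcases mul_eq_zero.mp this with h1 | h1 <;> linarith
    · apply two_rows_rank M ⟨1, by omega⟩ ⟨2, by omega⟩
      have n10 : (⟨1, by omega⟩ : Fin d) ≠ ⟨0, h⟩ := by simp [Fin.ext_iff]
      have n20 : (⟨2, by omega⟩ : Fin d) ≠ ⟨0, h⟩ := by simp [Fin.ext_iff]
      have n12 : (⟨1, by omega⟩ : Fin d) ≠ ⟨2, by omega⟩ := by simp [Fin.ext_iff]
      have e1 : M ⟨1, by omega⟩ ⟨1, by omega⟩ = -2 * s ⟨0, h⟩ := by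
        rw [hM]; simp [n10]
      have e2 : M ⟨1, by omega⟩ ⟨2, by omega⟩ = 0 := by
        rw [hM]; simp [n10, n20, n12]
      have e3 : M ⟨2, by omega⟩ ⟨1, by omega⟩ = 0 := by
        rw [hM]; simp [n10, n20, n12.symm]
      have e4 : M ⟨2, by omega⟩ ⟨2, by omega⟩ = -2 * s ⟨0, h⟩ := by
        rw [hM]; simp [n20]
      rw [e1, e2, e3, e4]
      intro hcon
      apply hs0
      have : (2 * s ⟨0, h⟩) * (2 * s ⟨0, h⟩) = 0 := by linarith [hcon]
      rcases mul_eq_zero.mp this with h1 | h1 <;> linarith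
  have zero_case : s = 0 → M.rank ≤ 1 := by
    intro h0
    have hM0 : M = 0 := by
      ext i j
      rw [hM, h0]
      simp
    rw [hM0, Matrix.rank_zero]
    omega
  exact ⟨⟨fun hrank => by by_contra hsn; have := main hsn; omega, zero_case⟩, main⟩

end Aux

/-- semi-nondegeneracy of the Zakharov–Kuznetsov Hessian.
Let `d ≥ 3` and `φ(ξ) = ξ¹|ξ|²`. Fix `p, p₂ ∈ ℝ^d` and put
`F(p₁) = φ(p) − φ(p₁) − φ(p₂) − φ(p − p₁ − p₂)`. Then for every `p₁`, writing
`p₃ := p − p₁ − p₂`, the Hessian matrix `D²F(p₁)` has rank at most `1` iff `p₁ + p₃ = 0`;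
in particular, if `p₁ + p₃ ≠ 0` then its rank is at least `2`. -/
theorem ZK_hessian_semi_nondegeneracy (d : ℕ) (hd : 3 ≤ d)
    (p p₂ : EuclideanSpace ℝ (Fin d)) (p₁ : EuclideanSpace ℝ (Fin d)) :
    (Matrix.rank (hessianMatrix d
        (fun q => phiZK d (by omega) p - phiZK d (by omega) q - phiZK d (by omega) p₂ -
          phiZK d (by omega) (p - q - p₂)) p₁) ≤ 1 ↔ p₁ + (p - p₁ - p₂) = 0) ∧
    (p₁ + (p - p₁ - p₂) ≠ 0 →
      2 ≤ Matrix.rank (hessianMatrix d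
        (fun q => phiZK d (by omega) p - phiZK d (by omega) q - phiZK d (by omega) p₂ -
          phiZK d (by omega) (p - q - p₂)) p₁)) := by
  have h : 0 < d := by omega
  exact rank_core h hd (p₁ + (p - p₁ - p₂)) _ (hessian_entry h p p₂ p₁)
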